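/- Let Φ_w = (G, φ, w) be a connected positively weighted T-gain graph. Then the largest eigenvalue of A(Φ_w) equals the largest eigenvalue of A(G_w) if and only if Φ is balanced. -/

import Mathlib

open Matrix
open scoped Classical

noncomputable section

namespace GG

variable {V : Type*}

/-- The gain of a walk: product of the gains of its oriented edges. -/
def walkGain {G : SimpleGraph V} (φ : V → V → ℂ) {u v : V} (p : G.Walk u v) : ℂ :=
  (p.darts.map (fun d => φ d.toProd.1 d.toProd.2)).prod

/-- `φ` is a `𝕋`-gain function on `G`: unit modulus on edges, inverse under reversal. -/
def IsGain (G : SimpleGraph V) (φ : V → V → ℂ) : Prop :=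
  (∀ i j, G.Adj i j → ‖φ i j‖ = 1) ∧ (∀ i j, G.Adj i j → φ j i = (φ i j)⁻¹)

/-- Adjacency matrix of a gain graph. -/
def gainAdj [Fintype V] [DecidableEq V] (G : SimpleGraph V) (φ : V → V → ℂ) :
    Matrix V V ℂ := fun i j => if G.Adj i j then φ i j else 0

/-- A gain graph is balanced if every cycle has gain 1. -/
def GBalanced (G : SimpleGraph V) (φ : V → V → ℂ) : Prop :=
  ∀ (u : V) (c : G.Walk u u), c.IsCycle → walkGain φ c = 1

/-- All shortest paths between any pair of vertices have the same gain. -/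
def DistCompatible (G : SimpleGraph V) (φ : V → V → ℂ) : Prop :=
  ∀ (s t : V) (p q : G.Walk s t), p.length = G.dist s t → q.length = G.dist s t →
    walkGain φ p = walkGain φ q

/-- The set of gains of shortest `s`-`t` paths. -/
def shortestGains (G : SimpleGraph V) (φ : V → V → ℂ) (s t : V) : Set ℂ :=
  {z | ∃ p : G.Walk s t, p.length = G.dist s t ∧ walkGain φ p = z}

/-- The element of `S` maximizing the real part, ties broken by maximal imaginary part
(correct for finite nonempty sets of gains). -/
def lexMaxGain (S : Set ℂ) : ℂ :=
  ⟨sSup (Complex.re '' S), sSup (Complex.im '' {z ∈ S | z.re = sSup (Complex.re '' S)})⟩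

/-- The element of `S` minimizing the real part, ties broken by minimal imaginary part. -/
def lexMinGain (S : Set ℂ) : ℂ :=
  ⟨sInf (Complex.re '' S), sInf (Complex.im '' {z ∈ S | z.re = sInf (Complex.re '' S)})⟩

/-- The maximum gain distance matrix `D^max_<(Φ)` with respect to a strict order `lt`. -/
def Dmax [Fintype V] [DecidableEq V] (G : SimpleGraph V) (φ : V → V → ℂ)
    (lt : V → V → Prop) : Matrix V V ℂ := fun s t =>
  if lt s t then lexMaxGain (shortestGains G φ s t) * (G.dist s t : ℂ)
  else if lt t s then (starRingEnd ℂ) (lexMaxGain (shortestGains G φ t s)) * (G.dist s t : ℂ)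
  else 0

/-- The minimum gain distance matrix `D^min_<(Φ)` with respect to a strict order `lt`. -/
def Dmin [Fintype V] [DecidableEq V] (G : SimpleGraph V) (φ : V → V → ℂ)
    (lt : V → V → Prop) : Matrix V V ℂ := fun s t =>
  if lt s t then lexMinGain (shortestGains G φ s t) * (G.dist s t : ℂ)
  else if lt t s then (starRingEnd ℂ) (lexMinGain (shortestGains G φ t s)) * (G.dist s t : ℂ)
  else 0

/-- Vertex order independence: the gain distance matrices agree for the standard order
and its reverse. -/
def OrderIndependent [Fintype V] [DecidableEq V] [LinearOrder V] (G : SimpleGraph V)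
    (φ : V → V → ℂ) : Prop :=
  Dmax G φ (· < ·) = Dmax G φ (fun a b => b < a) ∧
  Dmin G φ (· < ·) = Dmin G φ (fun a b => b < a)

/-- The largest (real) eigenvalue of a matrix. -/
def maxEig [Fintype V] [DecidableEq V] (A : Matrix V V ℂ) : ℝ :=
  sSup {r : ℝ | (r : ℂ) ∈ spectrum ℂ A}

/-- The spectral radius of a matrix. -/
def specRad [Fintype V] [DecidableEq V] (A : Matrix V V ℂ) : ℝ :=
  sSup {r : ℝ | ∃ z ∈ spectrum ℂ A, ‖z‖ = r}

/-- The distance matrix of the underlying graph, as a complex matrix. -/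
def distMatrix [Fintype V] [DecidableEq V] (G : SimpleGraph V) : Matrix V V ℂ :=
  fun i j => (G.dist i j : ℂ)

/-- Weighted gain adjacency matrix `A(Φ_w)`. -/
def wGainAdj [Fintype V] [DecidableEq V] (G : SimpleGraph V) (φ : V → V → ℂ)
    (w : V → V → ℝ) : Matrix V V ℂ := fun i j => if G.Adj i j then φ i j * (w i j : ℂ) else 0

/-- Weighted adjacency matrix `A(G_w)` of the underlying weighted graph. -/
def wAdj [Fintype V] [DecidableEq V] (G : SimpleGraph V) (w : V → V → ℝ) :
    Matrix V V ℂ := fun i j => if G.Adj i j then (w i j : ℂ) else 0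


section WalkGain

variable {G : SimpleGraph V} {φ : V → V → ℂ}

@[simp] lemma walkGain_nil {u : V} : walkGain φ (SimpleGraph.Walk.nil : G.Walk u u) = 1 := rfl

lemma walkGain_cons {u x v : V} (h : G.Adj u x) (p : G.Walk x v) :
    walkGain φ (SimpleGraph.Walk.cons h p) = φ u x * walkGain φ p := by
  simp [walkGain]

lemma walkGain_append {u v w' : V} (p : G.Walk u v) (q : G.Walk v w') :
    walkGain φ (p.append q) = walkGain φ p * walkGain φ q := by
  simp [walkGain, SimpleGraph.Walk.darts_append]

lemma abs_walkGain (hφ : IsGain G φ) {u v : V} (p : G.Walk u v) :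
    ‖walkGain φ p‖ = 1 := by
  induction p with
  | nil => simp
  | cons h p ih => rw [walkGain_cons, norm_mul, ih, hφ.1 _ _ h, one_mul]

lemma walkGain_ne_zero (hφ : IsGain G φ) {u v : V} (p : G.Walk u v) :
    walkGain φ p ≠ 0 := by
  intro h
  have := abs_walkGain hφ p
  rw [h] at this
  simp at this

lemma walkGain_reverse (hφ : IsGain G φ) {u v : V} (p : G.Walk u v) :
    walkGain φ p.reverse = (walkGain φ p)⁻¹ := by
  induction p with
  | nil => simp
  | cons h p ih =>
    rw [SimpleGraph.Walk.reverse_cons, walkGain_append, ih, walkGain_cons, walkGain_cons,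
      walkGain_nil, mul_one, hφ.2 _ _ h, mul_inv]
    ring

lemma walkGain_rotate {u v : V} (c : G.Walk u u) (h : v ∈ c.support) :
    walkGain φ (c.rotate v h) = walkGain φ c :=
  List.Perm.prod_eq (List.Perm.map _ (SimpleGraph.Walk.rotate_darts c v h).perm)

end WalkGain
section Closed

variable {G : SimpleGraph V} {φ : V → V → ℂ}

lemma walkGain_path_from_edge (hφ : IsGain G φ) {u x : V} (h : G.Adj u x) (r : G.Walk u x)
    (hr : r.IsPath) (he : s(u, x) ∈ r.edges) : walkGain φ r = φ u x := by
  cases r with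
  | nil => exact (h.ne rfl).elim
  | @cons _ y _ h₂ r₂ =>
    rw [SimpleGraph.Walk.edges_cons, List.mem_cons] at he
    rcases he with he | he
    · have hyx : y = x := by
        rcases Sym2.eq_iff.mp he with ⟨-, h1⟩ | ⟨h1, h2⟩
        · exact h1.symm
        · exact absurd h2 h.ne'
      subst hyx
      have hnil : r₂ = SimpleGraph.Walk.nil :=
        (SimpleGraph.Walk.isPath_iff_eq_nil).mp
          ((SimpleGraph.Walk.cons_isPath_iff _ _).mp hr).1
      subst hnil
      simp [walkGain_cons]
    · exfalso
      have hu : u ∈ r₂.support := SimpleGraph.Walk.fst_mem_support_of_mem_edges r₂ he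
      exact ((SimpleGraph.Walk.cons_isPath_iff _ _).mp hr).2 hu

lemma walkGain_closed (hφ : IsGain G φ) (hbal : GBalanced G φ) :
    ∀ (n : ℕ) (u : V) (c : G.Walk u u), c.length ≤ n → walkGain φ c = 1 := by
  intro n
  induction n with
  | zero =>
    intro u c hc
    cases c with
    | nil => simp
    | cons h p => simp at hc
  | succ n ih =>
    intro u c hlen
    by_cases hnd : c.support.tail.Nodup
    · -- Case B : tail of support has no duplicates
      cases c with
      | nil => simp
      | @cons _ x _ h q =>
        have hq : q.IsPath := by
          rw [SimpleGraph.Walk.isPath_def]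
          simpa using hnd
        by_cases he : s(u, x) ∈ q.edges
        · -- the edge is reused; q must be the single edge x-u
          have h1 : walkGain φ q.reverse = φ u x :=
            walkGain_path_from_edge hφ h q.reverse hq.reverse
              (by rwa [SimpleGraph.Walk.edges_reverse, List.mem_reverse])
          have h2 : walkGain φ q = (φ u x)⁻¹ := by
            have := walkGain_reverse hφ q
            rw [h1] at this
            rw [← inv_inv (walkGain φ q), ← this]
          rw [walkGain_cons, h2, mul_inv_cancel₀]
          intro h0
          have := hφ.1 _ _ h
          rw [h0] at this
          simp at this
        · -- we have a genuine cycle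
          exact hbal u _ ((SimpleGraph.Walk.cons_isCycle_iff q h).mpr ⟨hq, he⟩)
    · -- Case A : some vertex repeats in the tail; split the walk
      obtain ⟨v, hv2⟩ : ∃ v, 2 ≤ c.support.tail.count v := by
        rw [List.nodup_iff_count_le_one] at hnd
        push_neg at hnd
        obtain ⟨v, hv⟩ := hnd
        exact ⟨v, hv⟩
      have hvmem : v ∈ c.support :=
        List.mem_of_mem_tail (List.count_pos_iff.mp (by omega))
      obtain ⟨c', hgain, hlen', hcount'⟩ :
          ∃ c' : G.Walk v v, walkGain φ c' = walkGain φ c ∧ c'.length = c.length ∧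
            2 ≤ c'.support.tail.count v := by
        refine ⟨c.rotate v hvmem, walkGain_rotate c hvmem, ?_, ?_⟩
        · have := (SimpleGraph.Walk.rotate_darts c v hvmem).perm.length_eq
          rwa [SimpleGraph.Walk.length_darts, SimpleGraph.Walk.length_darts] at this
        · rwa [(SimpleGraph.Walk.support_rotate c v hvmem).perm.count_eq]
      rw [← hgain]
      clear hgain hnd hv2 hvmem
      revert hcount' hlen'
      cases c' with
      | nil => intro h1 h2; simp at h2
      | @cons _ y _ h q =>
        intro hlen' hcount'
        have hcq : 2 ≤ q.support.count v := by simpa using hcount'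
        have hvq : v ∈ q.support := List.count_pos_iff.mp (by omega)
        have hspec := SimpleGraph.Walk.take_spec q hvq
        have hlq : (q.takeUntil v hvq).length + (q.dropUntil v hvq).length = q.length := by
          rw [← SimpleGraph.Walk.length_append, hspec]
        have hdl : 1 ≤ (q.dropUntil v hvq).length := by
          by_contra h0
          push_neg at h0
          interval_cases hh : (q.dropUntil v hvq).length
          have hnil : q.dropUntil v hvq = SimpleGraph.Walk.nil := by
            cases hd : q.dropUntil v hvq with
            | nil => rfl
            | cons h' p' => rw [hd] at hh; simp at hh
          have : q.support.count v = 1 := by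
            conv_lhs => rw [← hspec]
            rw [hnil, SimpleGraph.Walk.append_nil]
            exact SimpleGraph.Walk.count_support_takeUntil_eq_one q hvq
          omega
        have hclen : 1 + (q.takeUntil v hvq).length + (q.dropUntil v hvq).length ≤ n + 1 := by
          have : (SimpleGraph.Walk.cons h q).length = q.length + 1 := by
            simp [SimpleGraph.Walk.length_cons]
          omega
        have e1 : walkGain φ (SimpleGraph.Walk.cons h (q.takeUntil v hvq)) = 1 := by
          apply ih
          rw [SimpleGraph.Walk.length_cons]
          omega
        have e2 : walkGain φ (q.dropUntil v hvq) = 1 := by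
          apply ih
          omega
        calc walkGain φ (SimpleGraph.Walk.cons h q)
            = walkGain φ (SimpleGraph.Walk.cons h
                ((q.takeUntil v hvq).append (q.dropUntil v hvq))) := by rw [hspec]
          _ = walkGain φ (SimpleGraph.Walk.cons h (q.takeUntil v hvq)) *
                walkGain φ (q.dropUntil v hvq) := by
              rw [walkGain_cons, walkGain_append, walkGain_cons, mul_assoc]
          _ = 1 := by rw [e1, e2, mul_one]

end Closed
section Switching

variable {G : SimpleGraph V} {φ : V → V → ℂ}

lemma walkGain_closed' (hφ : IsGain G φ) (hbal : GBalanced G φ) {u : V} (c : G.Walk u u) :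
    walkGain φ c = 1 :=
  walkGain_closed hφ hbal c.length u c le_rfl

lemma walkGain_eq_of_balanced (hφ : IsGain G φ) (hbal : GBalanced G φ) {a b : V}
    (p q : G.Walk a b) : walkGain φ p = walkGain φ q := by
  have h1 : walkGain φ (p.append q.reverse) = 1 := walkGain_closed' hφ hbal _
  rw [walkGain_append, walkGain_reverse hφ, ← div_eq_mul_inv] at h1
  exact (div_eq_one_iff_eq (walkGain_ne_zero hφ q)).mp h1

lemma exists_switching (hφ : IsGain G φ) (hconn : G.Connected) (hbal : GBalanced G φ) :
    ∃ ζ : V → ℂ, (∀ v, ζ v ≠ 0) ∧ ∀ i j, G.Adj i j → φ i j = (ζ i)⁻¹ * ζ j := by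
  have hne : Nonempty V := hconn.nonempty
  set o := Classical.arbitrary V with ho
  set ζ : V → ℂ := fun v => walkGain φ (hconn.preconnected o v).some with hζ
  refine ⟨ζ, fun v => walkGain_ne_zero hφ _, fun i j hij => ?_⟩
  have key : walkGain φ (((hconn.preconnected o i).some).append
      (SimpleGraph.Walk.cons hij SimpleGraph.Walk.nil)) = ζ j :=
    walkGain_eq_of_balanced hφ hbal _ _
  rw [walkGain_append, walkGain_cons, walkGain_nil, mul_one] at key
  have hi : ζ i ≠ 0 := walkGain_ne_zero hφ _
  field_simp [hζ] at key ⊢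
  rw [mul_comm] at key
  exact key

lemma walkGain_telescope {G : SimpleGraph V} {φ : V → V → ℂ} {ζ : V → ℂ}
    (hunit : ∀ v, ζ v * (starRingEnd ℂ) (ζ v) = 1)
    (hedge : ∀ i j, G.Adj i j → φ i j = ζ i * (starRingEnd ℂ) (ζ j)) {a b : V} (p : G.Walk a b) :
    walkGain φ p = ζ a * (starRingEnd ℂ) (ζ b) := by
  induction p with
  | nil => rw [walkGain_nil, hunit]
  | @cons u x v h p ih =>
    rw [walkGain_cons, ih, hedge _ _ h]
    calc ζ u * (starRingEnd ℂ) (ζ x) * (ζ x * (starRingEnd ℂ) (ζ v))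
        = ζ u * (starRingEnd ℂ) (ζ v) * (ζ x * (starRingEnd ℂ) (ζ x)) := by ring
      _ = ζ u * (starRingEnd ℂ) (ζ v) := by rw [hunit, mul_one]

end Switching
section Spectral

variable [Fintype V] [DecidableEq V] {A : Matrix V V ℂ}

lemma spec_set_eq (hA : A.IsHermitian) :
    {r : ℝ | (r : ℂ) ∈ spectrum ℂ A} = Set.range hA.eigenvalues := by
  ext r
  simp only [Set.mem_setOf_eq, Set.mem_range]
  conv_lhs => rw [hA.spectral_theorem]
  rw [Unitary.conjStarAlgAut_apply, Unitary.spectrum_star_right_conjugate, _root_.spectrum_diagonal]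
  constructor
  · rintro ⟨i, hi⟩
    refine ⟨i, ?_⟩
    have hi' : ((hA.eigenvalues i : ℝ) : ℂ) = (r : ℂ) := hi
    exact_mod_cast hi'
  · rintro ⟨i, hi⟩
    refine ⟨i, ?_⟩
    show ((hA.eigenvalues i : ℝ) : ℂ) = (r : ℂ)
    exact_mod_cast hi

lemma eig_le_maxEig (hA : A.IsHermitian) (i : V) : hA.eigenvalues i ≤ maxEig A := by
  unfold maxEig
  rw [spec_set_eq hA]
  exact le_csSup (Set.finite_range _).bddAbove (Set.mem_range_self i)

lemma exists_eig_eq_maxEig [Nonempty V] (hA : A.IsHermitian) :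
    ∃ i, hA.eigenvalues i = maxEig A := by
  have h : maxEig A ∈ Set.range hA.eigenvalues := by
    unfold maxEig
    rw [spec_set_eq hA]
    exact (Set.range_nonempty _).csSup_mem (Set.finite_range _)
  exact h

lemma star_dot_self (z : V → ℂ) :
    star z ⬝ᵥ z = ((∑ i, Complex.normSq (z i) : ℝ) : ℂ) := by
  simp only [dotProduct, Pi.star_apply, Complex.ofReal_sum]
  refine Finset.sum_congr rfl fun i _ => ?_
  rw [Complex.normSq_eq_conj_mul_self]
  rfl

lemma quadform_conj_aux (hA : A.IsHermitian) (B : Matrix V V ℂ) (y : V → ℂ) :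
    star ((hA.eigenvectorUnitary : Matrix V V ℂ) *ᵥ y) ⬝ᵥ
      (B *ᵥ ((hA.eigenvectorUnitary : Matrix V V ℂ) *ᵥ y)) =
    star y ⬝ᵥ ((star (hA.eigenvectorUnitary : Matrix V V ℂ) * B *
      (hA.eigenvectorUnitary : Matrix V V ℂ)) *ᵥ y) := by
  rw [Matrix.star_mulVec, ← Matrix.dotProduct_mulVec]
  simp only [Matrix.mulVec_mulVec, Matrix.star_eq_conjTranspose, Matrix.mul_assoc]

end Spectral
section Spectral2

variable [Fintype V] [DecidableEq V] {A : Matrix V V ℂ}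

lemma star_mul_self_mul_eq_diagonal' (hA : A.IsHermitian) :
    star (hA.eigenvectorUnitary : Matrix V V ℂ) * A * (hA.eigenvectorUnitary : Matrix V V ℂ) =
      Matrix.diagonal (RCLike.ofReal ∘ hA.eigenvalues) := by
  rw [← hA.conjStarAlgAut_star_eigenvectorUnitary, Unitary.conjStarAlgAut_star_apply]

lemma quadform_eq (hA : A.IsHermitian) (y : V → ℂ) :
    star ((hA.eigenvectorUnitary : Matrix V V ℂ) *ᵥ y) ⬝ᵥ
      (A *ᵥ ((hA.eigenvectorUnitary : Matrix V V ℂ) *ᵥ y)) =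
    ∑ i, (hA.eigenvalues i : ℂ) * (Complex.normSq (y i) : ℝ) := by
  rw [quadform_conj_aux hA A y, star_mul_self_mul_eq_diagonal' hA]
  simp only [dotProduct, Pi.star_apply, Matrix.mulVec_diagonal, Function.comp_apply]
  refine Finset.sum_congr rfl fun i _ => ?_
  have : (star (y i)) * (RCLike.ofReal (hA.eigenvalues i) * y i)
      = (hA.eigenvalues i : ℂ) * ((starRingEnd ℂ) (y i) * y i) := by
    show (starRingEnd ℂ) (y i) * ((hA.eigenvalues i : ℂ) * y i) = _
    ring
  rw [this, ← Complex.normSq_eq_conj_mul_self]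

lemma normsum_eq (hA : A.IsHermitian) (y : V → ℂ) :
    ∑ i, Complex.normSq (((hA.eigenvectorUnitary : Matrix V V ℂ) *ᵥ y) i) =
      ∑ i, Complex.normSq (y i) := by
  have h1 : star ((hA.eigenvectorUnitary : Matrix V V ℂ) *ᵥ y) ⬝ᵥ
      ((hA.eigenvectorUnitary : Matrix V V ℂ) *ᵥ y) = star y ⬝ᵥ y := by
    have := quadform_conj_aux hA 1 y
    rw [Matrix.one_mulVec] at this
    rw [this, mul_one, Matrix.mem_unitaryGroup_iff'.mp hA.eigenvectorUnitary.2,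
      Matrix.one_mulVec]
  rw [star_dot_self, star_dot_self] at h1
  exact_mod_cast h1

lemma mulVec_star_eigenvectorUnitary (hA : A.IsHermitian) (x : V → ℂ) :
    (hA.eigenvectorUnitary : Matrix V V ℂ) *ᵥ
      (star (hA.eigenvectorUnitary : Matrix V V ℂ) *ᵥ x) = x := by
  rw [Matrix.mulVec_mulVec, Matrix.mem_unitaryGroup_iff.mp hA.eigenvectorUnitary.2,
    Matrix.one_mulVec]

lemma re_quadform_eq (hA : A.IsHermitian) (y : V → ℂ) :
    (star ((hA.eigenvectorUnitary : Matrix V V ℂ) *ᵥ y) ⬝ᵥ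
      (A *ᵥ ((hA.eigenvectorUnitary : Matrix V V ℂ) *ᵥ y))).re =
    ∑ i, hA.eigenvalues i * Complex.normSq (y i) := by
  rw [quadform_eq hA y]
  rw [Complex.re_sum]
  refine Finset.sum_congr rfl fun i _ => ?_
  rw [← Complex.ofReal_mul, Complex.ofReal_re]

lemma rayleigh_le [Nonempty V] (hA : A.IsHermitian) (x : V → ℂ) :
    (star x ⬝ᵥ (A *ᵥ x)).re ≤ maxEig A * ∑ i, Complex.normSq (x i) := by
  set y := star (hA.eigenvectorUnitary : Matrix V V ℂ) *ᵥ x with hy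
  have hx : x = (hA.eigenvectorUnitary : Matrix V V ℂ) *ᵥ y :=
    (mulVec_star_eigenvectorUnitary hA x).symm
  rw [hx, re_quadform_eq hA y, normsum_eq hA y, Finset.mul_sum]
  exact Finset.sum_le_sum fun i _ =>
    mul_le_mul_of_nonneg_right (eig_le_maxEig hA i) (Complex.normSq_nonneg _)

lemma eigenvector_of_rayleigh_eq [Nonempty V] (hA : A.IsHermitian) (x : V → ℂ)
    (hx : (star x ⬝ᵥ (A *ᵥ x)).re = maxEig A * ∑ i, Complex.normSq (x i)) :
    A *ᵥ x = (maxEig A : ℂ) • x := by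
  set y := star (hA.eigenvectorUnitary : Matrix V V ℂ) *ᵥ x with hy
  have hxy : x = (hA.eigenvectorUnitary : Matrix V V ℂ) *ᵥ y :=
    (mulVec_star_eigenvectorUnitary hA x).symm
  rw [hxy, re_quadform_eq hA y, normsum_eq hA y, Finset.mul_sum] at hx
  have hterm : ∀ i ∈ Finset.univ, hA.eigenvalues i * Complex.normSq (y i)
      = maxEig A * Complex.normSq (y i) :=
    (Finset.sum_eq_sum_iff_of_le fun i _ =>
      mul_le_mul_of_nonneg_right (eig_le_maxEig hA i) (Complex.normSq_nonneg _)).mp hx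
  have hDy : ∀ i, (hA.eigenvalues i : ℂ) * y i = (maxEig A : ℂ) * y i := by
    intro i
    by_cases h0 : y i = 0
    · rw [h0, mul_zero, mul_zero]
    · have hns : Complex.normSq (y i) ≠ 0 := fun hc => h0 (Complex.normSq_eq_zero.mp hc)
      have := hterm i (Finset.mem_univ i)
      have heig : hA.eigenvalues i = maxEig A := by
        field_simp at this
        tauto
      rw [heig]
  have hAU : A * (hA.eigenvectorUnitary : Matrix V V ℂ)
      = (hA.eigenvectorUnitary : Matrix V V ℂ) *
          Matrix.diagonal (RCLike.ofReal ∘ hA.eigenvalues) := by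
    have h0 := congrArg (fun M => (hA.eigenvectorUnitary : Matrix V V ℂ) * M)
      (star_mul_self_mul_eq_diagonal' hA)
    simp only [← Matrix.mul_assoc] at h0
    rwa [Matrix.mem_unitaryGroup_iff.mp hA.eigenvectorUnitary.2, Matrix.one_mul] at h0
  have hdiag : Matrix.diagonal (RCLike.ofReal ∘ hA.eigenvalues) *ᵥ y = (maxEig A : ℂ) • y := by
    ext i
    rw [Matrix.mulVec_diagonal, Pi.smul_apply, smul_eq_mul]
    simpa using hDy i
  rw [hxy, Matrix.mulVec_mulVec, hAU, ← Matrix.mulVec_mulVec, hdiag, Matrix.mulVec_smul]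

lemma exists_unit_eigenvector [Nonempty V] (hA : A.IsHermitian) :
    ∃ x : V → ℂ, (∑ i, Complex.normSq (x i)) = 1 ∧ A *ᵥ x = (maxEig A : ℂ) • x := by
  obtain ⟨i₀, hi₀⟩ := exists_eig_eq_maxEig hA
  refine ⟨⇑(hA.eigenvectorBasis i₀), ?_, ?_⟩
  · have hnorm : ‖hA.eigenvectorBasis i₀‖ = 1 := hA.eigenvectorBasis.orthonormal.1 i₀
    have := EuclideanSpace.norm_eq (hA.eigenvectorBasis i₀)
    rw [hnorm] at this
    have hsq : ∑ i, ‖hA.eigenvectorBasis i₀ i‖ ^ 2 = 1 := by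
      have h1 : (1 : ℝ) = Real.sqrt (∑ i, ‖hA.eigenvectorBasis i₀ i‖ ^ 2) := this
      have h2 := congrArg (· ^ 2) h1
      simpa [Real.sq_sqrt (Finset.sum_nonneg fun i _ => sq_nonneg _)] using h2.symm
    rw [← hsq]
    refine Finset.sum_congr rfl fun i _ => ?_
    rw [← Complex.sq_norm]
  · rw [hA.mulVec_eigenvectorBasis i₀]
    ext j
    simp [Pi.smul_apply, hi₀, Complex.real_smul]

end Spectral2
section Main

variable [Fintype V] [DecidableEq V]

lemma inv_eq_conj {z : ℂ} (h : ‖z‖ = 1) : z⁻¹ = (starRingEnd ℂ) z := by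
  rw [Complex.inv_def, Complex.normSq_eq_norm_sq, h]
  simp

lemma re_eq_abs_imp {z : ℂ} (h : z.re = ‖z‖) :
    z = ((‖z‖ : ℝ) : ℂ) := by
  have him : z.im = 0 := by
    have h2 : ‖z‖ ^ 2 = z.re ^ 2 + z.im ^ 2 := by
      rw [Complex.sq_norm, Complex.normSq_apply]; ring
    rw [← h] at h2
    nlinarith [sq_nonneg z.im]
  apply Complex.ext
  · simp [h]
  · simp [him]

lemma wGainAdj_isHermitian (G : SimpleGraph V) {φ : V → V → ℂ} (hφ : IsGain G φ)
    (w : V → V → ℝ) (hsymm : ∀ i j, w i j = w j i) : (wGainAdj G φ w).IsHermitian := by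
  show (wGainAdj G φ w)ᴴ = wGainAdj G φ w
  ext i j
  rw [Matrix.conjTranspose_apply]
  unfold wGainAdj
  by_cases h : G.Adj i j
  · have h' : G.Adj j i := h.symm
    simp only [h, h', if_true]
    have h1 : (starRingEnd ℂ) (φ j i) = φ i j := by
      rw [hφ.2 _ _ h, map_inv₀, ← inv_eq_conj (hφ.1 _ _ h), inv_inv]
    show (starRingEnd ℂ) (φ j i * ((w j i : ℝ) : ℂ)) = _
    rw [_root_.map_mul, h1, Complex.conj_ofReal, hsymm j i]
  · have h' : ¬ G.Adj j i := fun hc => h hc.symm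
    simp [h, h']

lemma wAdj_isHermitian (G : SimpleGraph V) (w : V → V → ℝ)
    (hsymm : ∀ i j, w i j = w j i) : (wAdj G w).IsHermitian := by
  show (wAdj G w)ᴴ = wAdj G w
  ext i j
  rw [Matrix.conjTranspose_apply]
  unfold wAdj
  by_cases h : G.Adj i j
  · have h' : G.Adj j i := h.symm
    simp only [h, h', if_true]
    show (starRingEnd ℂ) ((w j i : ℝ) : ℂ) = _
    rw [Complex.conj_ofReal, hsymm j i]
  · have h' : ¬ G.Adj j i := fun hc => h hc.symm
    simp [h, h']

lemma maxEig_eq_of_balanced (G : SimpleGraph V) (hconn : G.Connected) {φ : V → V → ℂ}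
    (hφ : IsGain G φ) (w : V → V → ℝ) (hbal : GBalanced G φ) :
    maxEig (wGainAdj G φ w) = maxEig (wAdj G w) := by
  obtain ⟨ζ, hζ0, hζ⟩ := exists_switching hφ hconn hbal
  set u : (Matrix V V ℂ)ˣ :=
    ⟨Matrix.diagonal ζ, Matrix.diagonal (fun v => (ζ v)⁻¹),
      by rw [Matrix.diagonal_mul_diagonal]
         convert Matrix.diagonal_one using 2
         funext v
         exact mul_inv_cancel₀ (hζ0 v),
      by rw [Matrix.diagonal_mul_diagonal]
         convert Matrix.diagonal_one using 2
         funext v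
         exact inv_mul_cancel₀ (hζ0 v)⟩ with hu
  have hconj : (Matrix.diagonal fun v => (ζ v)⁻¹) * wAdj G w * Matrix.diagonal ζ
      = wGainAdj G φ w := by
    ext i j
    rw [Matrix.mul_diagonal, Matrix.diagonal_mul]
    unfold wAdj wGainAdj
    by_cases h : G.Adj i j
    · simp only [h, if_true]
      rw [hζ i j h]; ring
    · simp [h]
  have hspec : spectrum ℂ (wGainAdj G φ w) = spectrum ℂ (wAdj G w) := by
    rw [← hconj]
    exact spectrum.units_conjugate' (R := ℂ) (a := wAdj G w) (u := u)
  unfold maxEig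
  rw [hspec]

end Main
section Forward

variable [Fintype V] [DecidableEq V]

lemma re_dot_eq_sum (M : Matrix V V ℂ) (x y : V → ℂ) :
    (star x ⬝ᵥ (M *ᵥ y)).re = ∑ i, ∑ j, ((starRingEnd ℂ) (x i) * M i j * y j).re := by
  simp only [dotProduct, Matrix.mulVec, Pi.star_apply, Complex.re_sum]
  refine Finset.sum_congr rfl fun i _ => ?_
  rw [show star (x i) * ∑ j, M i j * y j = ∑ j, (starRingEnd ℂ) (x i) * M i j * y j by
        rw [Finset.mul_sum]; exact Finset.sum_congr rfl fun j _ => by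
          rw [Complex.star_def]; ring]
  rw [Complex.re_sum]

theorem forward_dir {G : SimpleGraph V} (hconn : G.Connected) {φ : V → V → ℂ}
    (hφ : IsGain G φ) {w : V → V → ℝ} (hsymm : ∀ i j, w i j = w j i)
    (hpos : ∀ i j, G.Adj i j → 0 < w i j)
    (heq : maxEig (wGainAdj G φ w) = maxEig (wAdj G w)) : GBalanced G φ := by
  have hne : Nonempty V := hconn.nonempty
  have hHΦ : (wGainAdj G φ w).IsHermitian := wGainAdj_isHermitian G hφ w hsymm
  have hHG : (wAdj G w).IsHermitian := wAdj_isHermitian G w hsymm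
  obtain ⟨x, hx1, hxe⟩ := exists_unit_eigenvector hHΦ
  set μ := maxEig (wGainAdj G φ w) with hμ
  -- the Rayleigh quotient of x equals μ
  have hq : (star x ⬝ᵥ (wGainAdj G φ w *ᵥ x)).re = μ := by
    rw [hxe]
    have : star x ⬝ᵥ ((μ : ℂ) • x) = (μ : ℂ) * (star x ⬝ᵥ x) := by
      simp [dotProduct, Finset.mul_sum]
      exact Finset.sum_congr rfl fun i _ => by ring
    rw [this, star_dot_self, hx1]
    simp
  set a : V → ℂ := fun i => ((‖x i‖ : ℝ) : ℂ) with ha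
  have hsum_a : ∑ i, Complex.normSq (a i) = 1 := by
    rw [← hx1]
    refine Finset.sum_congr rfl fun i _ => ?_
    rw [ha]
    simp only [Complex.normSq_ofReal]
    rw [← Complex.sq_norm, sq]
  -- termwise comparison
  have hterm : ∀ i j, ((starRingEnd ℂ) (x i) * wGainAdj G φ w i j * x j).re ≤
      ((starRingEnd ℂ) (a i) * wAdj G w i j * a j).re := by
    intro i j
    by_cases h : G.Adj i j
    · have hrhs : ((starRingEnd ℂ) (a i) * wAdj G w i j * a j).re
          = ‖x i‖ * w i j * ‖x j‖ := by
        rw [ha]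
        unfold wAdj
        simp only [h, if_true, Complex.conj_ofReal]
        rw [← Complex.ofReal_mul, ← Complex.ofReal_mul, Complex.ofReal_re]
      rw [hrhs]
      calc ((starRingEnd ℂ) (x i) * wGainAdj G φ w i j * x j).re
          ≤ ‖(starRingEnd ℂ) (x i) * wGainAdj G φ w i j * x j‖ :=
            Complex.re_le_norm _
        _ = ‖x i‖ * w i j * ‖x j‖ := by
            rw [norm_mul, norm_mul, Complex.norm_conj]
            unfold wGainAdj
            simp only [h, if_true]
            rw [norm_mul, hφ.1 _ _ h, one_mul, Complex.norm_real,
              Real.norm_of_nonneg (hpos _ _ h).le]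
    · unfold wGainAdj wAdj
      simp [h]
  -- the sums are squeezed
  have hra : (star a ⬝ᵥ (wAdj G w *ᵥ a)).re ≤ μ := by
    have := rayleigh_le hHG a
    rw [hsum_a, mul_one, ← heq] at this
    exact this
  have hsum_le : ∑ i, ∑ j, ((starRingEnd ℂ) (x i) * wGainAdj G φ w i j * x j).re ≤
      ∑ i, ∑ j, ((starRingEnd ℂ) (a i) * wAdj G w i j * a j).re :=
    Finset.sum_le_sum fun i _ => Finset.sum_le_sum fun j _ => hterm i j
  have hchain1 : ∑ i, ∑ j, ((starRingEnd ℂ) (x i) * wGainAdj G φ w i j * x j).re = μ := by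
    rw [← re_dot_eq_sum]; exact hq
  have hchain2 : ∑ i, ∑ j, ((starRingEnd ℂ) (a i) * wAdj G w i j * a j).re = μ := by
    have h1 : ∑ i, ∑ j, ((starRingEnd ℂ) (a i) * wAdj G w i j * a j).re
        = (star a ⬝ᵥ (wAdj G w *ᵥ a)).re := (re_dot_eq_sum _ _ _).symm
    have h2 : μ ≤ ∑ i, ∑ j, ((starRingEnd ℂ) (a i) * wAdj G w i j * a j).re := by
      rw [← hchain1]; exact hsum_le
    rw [h1] at h2 ⊢
    exact le_antisymm h2 hra |>.symm
  -- a is an eigenvector of the underlying weighted graph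
  have hEa : wAdj G w *ᵥ a = ((maxEig (wAdj G w) : ℝ) : ℂ) • a := by
    apply eigenvector_of_rayleigh_eq hHG a
    rw [re_dot_eq_sum, hchain2, hsum_a, mul_one, heq]
  -- all entries of x are nonzero
  have hstep : ∀ i, x i = 0 → ∀ j, G.Adj i j → x j = 0 := by
    intro i hi j hij
    have h0 : (wAdj G w *ᵥ a) i = 0 := by
      rw [hEa]
      simp [ha, hi]
    have h1 : ∑ j, ((wAdj G w i j) * a j).re = 0 := by
      have : (wAdj G w *ᵥ a) i = ∑ j, wAdj G w i j * a j := rfl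
      rw [this] at h0
      rw [← Complex.re_sum, h0]
      rfl
    have hnn : ∀ k ∈ Finset.univ, 0 ≤ ((wAdj G w i k) * a k).re := by
      intro k _
      unfold wAdj
      by_cases hk : G.Adj i k
      · simp only [hk, if_true, ha]
        rw [← Complex.ofReal_mul, Complex.ofReal_re]
        exact mul_nonneg (hpos _ _ hk).le (norm_nonneg _)
      · simp [hk]
    have hz := (Finset.sum_eq_zero_iff_of_nonneg hnn).mp h1 j (Finset.mem_univ j)
    unfold wAdj at hz
    simp only [hij, if_true, ha] at hz
    rw [← Complex.ofReal_mul, Complex.ofReal_re] at hz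
    rcases mul_eq_zero.mp hz with hw | habs
    · exact absurd hw (hpos _ _ hij).ne'
    · exact norm_eq_zero.mp habs
  have hall : ∀ i, x i ≠ 0 := by
    intro i0 hi0
    have hwalk : ∀ (i j : V) (_ : G.Walk i j), x i = 0 → x j = 0 := by
      intro i j p
      induction p with
      | nil => exact id
      | cons h p ih => exact fun h0 => ih (hstep _ h0 _ h)
    have hzero : ∀ j, x j = 0 := fun j => hwalk i0 j (hconn.preconnected i0 j).some hi0
    have : (1 : ℝ) = 0 := by
      rw [← hx1]
      exact Finset.sum_eq_zero fun i _ => by rw [hzero i]; simp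
    norm_num at this
  -- termwise equality
  have hte : ∀ i j, ((starRingEnd ℂ) (x i) * wGainAdj G φ w i j * x j).re =
      ((starRingEnd ℂ) (a i) * wAdj G w i j * a j).re := by
    have hprod : ∑ p ∈ Finset.univ ×ˢ Finset.univ,
        ((starRingEnd ℂ) (x p.1) * wGainAdj G φ w p.1 p.2 * x p.2).re
        = ∑ p ∈ Finset.univ ×ˢ Finset.univ,
        ((starRingEnd ℂ) (a p.1) * wAdj G w p.1 p.2 * a p.2).re := by
      rw [Finset.sum_product, Finset.sum_product, hchain1, hchain2]
    have := (Finset.sum_eq_sum_iff_of_le (fun p _ => hterm p.1 p.2)).mp hprod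
    intro i j
    exact this (i, j) (Finset.mem_product.mpr ⟨Finset.mem_univ i, Finset.mem_univ j⟩)
  -- the gain on each edge
  have hφval : ∀ i j, G.Adj i j → (starRingEnd ℂ) (x i) * φ i j * x j
      = ((‖x i‖ * ‖x j‖ : ℝ) : ℂ) := by
    intro i j hij
    have h := hte i j
    unfold wGainAdj wAdj at h
    simp only [hij, if_true, ha, Complex.conj_ofReal] at h
    set z := (starRingEnd ℂ) (x i) * φ i j * x j with hz
    have hlhs : ((starRingEnd ℂ) (x i) * (φ i j * ((w i j : ℝ) : ℂ)) * x j).re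
        = z.re * w i j := by
      rw [show (starRingEnd ℂ) (x i) * (φ i j * ((w i j : ℝ) : ℂ)) * x j
          = z * ((w i j : ℝ) : ℂ) by rw [hz]; ring]
      simp [Complex.mul_re]
    have hrhs : (((‖x i‖ : ℝ) : ℂ) * ((w i j : ℝ) : ℂ) *
        ((‖x j‖ : ℝ) : ℂ)).re = ‖x i‖ * ‖x j‖ * w i j := by
      rw [← Complex.ofReal_mul, ← Complex.ofReal_mul, Complex.ofReal_re]
      ring
    rw [hlhs, hrhs] at h
    have hre : z.re = ‖x i‖ * ‖x j‖ :=
      mul_right_cancel₀ (hpos _ _ hij).ne' h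
    have habs : ‖z‖ = ‖x i‖ * ‖x j‖ := by
      rw [hz, norm_mul, norm_mul, Complex.norm_conj, hφ.1 _ _ hij, mul_one]
    have := re_eq_abs_imp (by rw [hre, habs])
    rw [habs] at this
    exact this
  -- define the switching function
  set ζ : V → ℂ := fun v => x v * (((‖x v‖ : ℝ) : ℂ))⁻¹ with hzeta
  have hrne : ∀ v, ((‖x v‖ : ℝ) : ℂ) ≠ 0 := by
    intro v h0
    exact hall v (norm_eq_zero.mp (by exact_mod_cast h0))
  have hnormsq : ∀ v, (starRingEnd ℂ) (x v) * x v
      = ((‖x v‖ : ℝ) : ℂ) * ((‖x v‖ : ℝ) : ℂ) := by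
    intro v
    rw [← Complex.normSq_eq_conj_mul_self, ← Complex.ofReal_mul, ← Complex.sq_norm, sq]
  have hunit : ∀ v, ζ v * (starRingEnd ℂ) (ζ v) = 1 := by
    intro v
    rw [hzeta]
    simp only [_root_.map_mul, map_inv₀, Complex.conj_ofReal]
    have h4 : x v * (starRingEnd ℂ) (x v)
        = ((‖x v‖ : ℝ) : ℂ) * ((‖x v‖ : ℝ) : ℂ) := by
      linear_combination hnormsq v
    field_simp [hrne v]
    linear_combination h4
  have hedge : ∀ i j, G.Adj i j → φ i j = ζ i * (starRingEnd ℂ) (ζ j) := by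
    intro i j hij
    have h := hφval i j hij
    rw [hzeta]
    simp only [_root_.map_mul, map_inv₀, Complex.conj_ofReal]
    have hci : (starRingEnd ℂ) (x i) ≠ 0 := fun hc => hall i (by
      have := congrArg (starRingEnd ℂ) hc
      rwa [Complex.conj_conj, map_zero] at this)
    have hxj : x j ≠ 0 := hall j
    rw [Complex.ofReal_mul] at h
    set ri : ℂ := ((‖x i‖ : ℝ) : ℂ) with hri
    set rj : ℂ := ((‖x j‖ : ℝ) : ℂ) with hrj
    have key : (ri * rj) * (ri * rj) * φ i j = x i * (starRingEnd ℂ) (x j) * (ri * rj) := by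
      linear_combination (x i * (starRingEnd ℂ) (x j)) * h -
        (φ i j * x j * (starRingEnd ℂ) (x j)) * hnormsq i -
        (φ i j * ri * ri) * hnormsq j
    have h4 : φ i j * (ri * rj) = x i * (starRingEnd ℂ) (x j) :=
      mul_right_cancel₀ (mul_ne_zero (hrne i) (hrne j)) (by linear_combination key)
    field_simp [show ri ≠ 0 from hrne i, show rj ≠ 0 from hrne j]
    linear_combination h4
  intro u c hc
  rw [walkGain_telescope hunit hedge c, hunit]

end Forward
/-- for a connected positively weighted gain graph, the largest eigenvalues of
`A(Φ_w)` and `A(G_w)` coincide iff `Φ` is balanced. -/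
theorem weighted_maxEig_iff_balanced {V : Type*} [Fintype V] [DecidableEq V]
    (G : SimpleGraph V) (hconn : G.Connected) (φ : V → V → ℂ) (hφ : IsGain G φ)
    (w : V → V → ℝ) (hsymm : ∀ i j, w i j = w j i) (hpos : ∀ i j, G.Adj i j → 0 < w i j) :
    maxEig (wGainAdj G φ w) = maxEig (wAdj G w) ↔ GBalanced G φ := by
  constructor
  · exact forward_dir hconn hφ hsymm hpos
  · exact maxEig_eq_of_balanced G hconn hφ w

end GG
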